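/- Let β∖γ be a rook strip and let X, Z be LR-fillings of type (α, β, γ) with Z <_dom X. Then there exists an LR-filling Y of the same type such that Z ≤_dom Y and Y is obtained from X by a single decreasing box move. Consequently Z ≤_dom X implies Z ≤_box X. -/

import Mathlib

open Equiv

/-! ### Permutations: adjacent transpositions, Coxeter length, Bruhat order -/

/-- `s` is an adjacent transposition `(i, i+1)` in `S_n` (values `0`-indexed). -/
def IsAdjTrans {n : ℕ} (s : Perm (Fin n)) : Prop :=
  ∃ (i : ℕ) (h : i + 1 < n), s = Equiv.swap ⟨i, Nat.lt_of_succ_lt h⟩ ⟨i + 1, h⟩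

/-- Coxeter length: the minimal number of adjacent transpositions in a factorization. -/
noncomputable def permLength {n : ℕ} (x : Perm (Fin n)) : ℕ :=
  sInf {k | ∃ l : List (Perm (Fin n)), l.length = k ∧ (∀ s ∈ l, IsAdjTrans s) ∧ l.prod = x}

/-- Strict Bruhat order: generated by `u < t * u` for transpositions `t`
increasing the length. -/
def BruhatLT {n : ℕ} (x z : Perm (Fin n)) : Prop :=
  Relation.TransGen
    (fun u v => ∃ t : Perm (Fin n), t.IsSwap ∧ v = t * u ∧ permLength u < permLength v) x z

/-- Bruhat order (reflexive version). -/
def BruhatLE {n : ℕ} (x z : Perm (Fin n)) : Prop := x = z ∨ BruhatLT x z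

/-! ### Partitions -/

/-- A partition: an antitone, finitely supported function `ℕ → ℕ`
(the part `αᵢ` of the paper is `f (i-1)`; rows are `0`-indexed). -/
structure Partn where
  f : ℕ → ℕ
  antitone' : Antitone f
  finite_supp : ∃ N, ∀ i, N ≤ i → f i = 0

/-- `p` is a partition of `n`. -/
def PartnOf (p : Partn) (n : ℕ) : Prop :=
  ∃ N, (∀ i, N ≤ i → p.f i = 0) ∧ ∑ i ∈ Finset.range N, p.f i = n

/-- The partial sum `α₁ + ⋯ + α_j` of the first `j` parts. -/
def psum (p : Partn) (j : ℕ) : ℕ := ∑ i ∈ Finset.range j, p.f i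

/-- The set of block boundaries `α₁, α₁+α₂, …` (`1`-indexed positions). -/
def Bdry (p : Partn) : Set ℕ := {m | ∃ j, 1 ≤ j ∧ m = psum p j}

/-- `S^α`: permutations whose values within each block of `α` occur in increasing
order of position.  Values are `0`-indexed: value `v` is the paper's value `v+1`,
and `v`, `v+1` lie in the same block iff `v+1 ∉ Bdry α`. -/
def SAset (α : Partn) {n : ℕ} (x : Perm (Fin n)) : Prop :=
  ∀ (v : ℕ) (h : v + 1 < n), (v + 1) ∉ Bdry α →
    x⁻¹ ⟨v, Nat.lt_of_succ_lt h⟩ < x⁻¹ ⟨v + 1, h⟩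

/-- Containment of partitions. -/
def PartnSub (γ β : Partn) : Prop := ∀ i, γ.f i ≤ β.f i

/-- The transpose (conjugate) partition: `β'_j = #{i : βᵢ ≥ j}` (columns `0`-indexed). -/
noncomputable def ptranspose (p : Partn) (j : ℕ) : ℕ := Set.ncard {i | j < p.f i}

/-- `β∖γ` is a vertical strip: `βᵢ ≤ γᵢ + 1` for all `i`. -/
def VertStrip (β γ : Partn) : Prop := ∀ i, β.f i ≤ γ.f i + 1

/-- `β∖γ` is a horizontal strip: `β'∖γ'` is a vertical strip. -/
def HorizStrip (β γ : Partn) : Prop := ∀ j, ptranspose β j ≤ ptranspose γ j + 1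

/-- A rook strip is a horizontal and vertical strip. -/
def RookStrip (β γ : Partn) : Prop := VertStrip β γ ∧ HorizStrip β γ

/-- The boxes of the skew diagram `β∖γ` (row, column), `0`-indexed. -/
def SkewCells (β γ : Partn) : Set (ℕ × ℕ) := {c | γ.f c.1 ≤ c.2 ∧ c.2 < β.f c.1}

/-! ### Fillings of skew diagrams -/

/-- A filling of the skew diagram `β∖γ` with content `α`: each box gets an entry
`≥ 1`, and there are `α_u` entries equal to `u` (the paper's `αᵤ` is `α.f (u-1)`). -/
structure SkFilling (α β γ : Partn) where
  entry : ℕ × ℕ → ℕ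
  zero_outside : ∀ c, c ∉ SkewCells β γ → entry c = 0
  pos_inside : ∀ c ∈ SkewCells β γ, 1 ≤ entry c
  content : ∀ u : ℕ, 1 ≤ u → Set.ncard {c ∈ SkewCells β γ | entry c = u} = α.f (u - 1)

/-- The Littlewood–Richardson conditions: rows weakly increase, columns strictly
increase, and the lattice permutation property holds. -/
def IsLRF {α β γ : Partn} (F : SkFilling α β γ) : Prop :=
  (∀ i j j' : ℕ, (i, j) ∈ SkewCells β γ → (i, j') ∈ SkewCells β γ → j ≤ j' →
      F.entry (i, j) ≤ F.entry (i, j')) ∧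
  (∀ i i' j : ℕ, (i, j) ∈ SkewCells β γ → (i', j) ∈ SkewCells β γ → i < i' →
      F.entry (i, j) < F.entry (i', j)) ∧
  (∀ u c : ℕ, 2 ≤ u →
      Set.ncard {p ∈ SkewCells β γ | c ≤ p.2 ∧ F.entry p = u} ≤
      Set.ncard {p ∈ SkewCells β γ | c ≤ p.2 ∧ F.entry p = u - 1})

/-- Row `i` of the partition `γ⁽ᵘ⁾`: the boxes of `γ` together with the boxes of
`β∖γ` whose entry is at most `u`. -/
noncomputable def regionRow {α β γ : Partn} (F : SkFilling α β γ) (u i : ℕ) : ℕ :=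
  γ.f i + Set.ncard {j | (i, j) ∈ SkewCells β γ ∧ F.entry (i, j) ≤ u}

/-- Dominance order on fillings: `Z ≤_dom X` iff `δ⁽ᵘ⁾ ≤_dom γ⁽ᵘ⁾` for every `u`. -/
def DomLE {α β γ : Partn} (Z X : SkFilling α β γ) : Prop :=
  ∀ u j : ℕ, ∑ i ∈ Finset.range j, regionRow Z u i ≤ ∑ i ∈ Finset.range j, regionRow X u i

/-- A single sorting swap: exchange two out-of-order entries within a row
(left entry bigger) or within a column (upper entry bigger). -/
def SortSwap (β γ : Partn) (W Z : ℕ × ℕ → ℕ) : Prop :=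
  ∃ p q : ℕ × ℕ, p ∈ SkewCells β γ ∧ q ∈ SkewCells β γ ∧
    ((p.1 = q.1 ∧ p.2 < q.2) ∨ (p.2 = q.2 ∧ p.1 < q.1)) ∧
    W q < W p ∧
    Z = Function.update (Function.update W p (W q)) q (W p)

/-- `Z` is obtained from `X` by a decreasing box move: two entries of `X` are
exchanged so that the smaller entry is in the lower position after the exchange,
and then rows and columns are re-sorted if necessary. -/
def BoxMove {α β γ : Partn} (X Z : SkFilling α β γ) : Prop :=
  ∃ p q : ℕ × ℕ, p ∈ SkewCells β γ ∧ q ∈ SkewCells β γ ∧ p.1 < q.1 ∧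
    X.entry p < X.entry q ∧
    Relation.ReflTransGen (SortSwap β γ)
      (Function.update (Function.update X.entry p (X.entry q)) q (X.entry p)) Z.entry

/-- The box order on LR-fillings: generated by decreasing box moves. -/
def LeBox {α β γ : Partn} (Z X : SkFilling α β γ) : Prop :=
  Relation.ReflTransGen (fun Y W => IsLRF Y ∧ IsLRF W ∧ BoxMove W Y) Z X

/-! ### Reading words and standardization -/

/-- The block (paper entry, `1`-indexed) containing the `0`-indexed value `v`. -/
noncomputable def blockIdx (α : Partn) (v : ℕ) : ℕ := sInf {u | v < psum α u}

/-- `e` enumerates the boxes of the rook strip `β∖γ` from top right to bottom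
left, i.e. in increasing order of rows. -/
def IsRowRead (β γ : Partn) {n : ℕ} (e : Fin n → ℕ × ℕ) : Prop :=
  (∀ k, e k ∈ SkewCells β γ) ∧ Function.Injective e ∧
  (∀ c ∈ SkewCells β γ, ∃ k, e k = c) ∧
  ∀ k l : Fin n, k < l → (e k).1 < (e l).1

/-- `e` enumerates the boxes of `β∖γ` column by column from left to right, each
column read from bottom to top (the reading order of the word `ω`). -/
def IsColRead (β γ : Partn) {n : ℕ} (e : Fin n → ℕ × ℕ) : Prop :=
  (∀ k, e k ∈ SkewCells β γ) ∧ Function.Injective e ∧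
  (∀ c ∈ SkewCells β γ, ∃ k, e k = c) ∧
  ∀ k l : Fin n, k < l →
    (e k).2 < (e l).2 ∨ ((e k).2 = (e l).2 ∧ (e l).1 < (e k).1)

/-- `p` is the standardization `π(F)` of the reading word of the filling `F`
with respect to the reading enumeration `e`: position `k` receives a value in the
block corresponding to the entry of the `k`-th box, and equal entries receive
their values in reading order. -/
def IsStdOf (α : Partn) {β γ : Partn} {n : ℕ} (F : SkFilling α β γ)
    (e : Fin n → ℕ × ℕ) (p : Perm (Fin n)) : Prop :=
  (∀ k : Fin n, blockIdx α (p k) = F.entry (e k)) ∧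
  ∀ k l : Fin n, k < l → F.entry (e k) = F.entry (e l) → p k < p l

/-- The `α`-recording tableau of `x` is standard: the entries `x⁻¹(psum α u + j)`
increase along rows and down columns of the shape `α` (rows `0`-indexed). -/
def RecStd (α : Partn) {n : ℕ} (x : Perm (Fin n)) : Prop :=
  (∀ u j j' : ℕ, j < j' → j' < α.f u →
    ∀ (h : psum α u + j < n) (h' : psum α u + j' < n),
      x⁻¹ ⟨psum α u + j, h⟩ < x⁻¹ ⟨psum α u + j', h'⟩) ∧
  (∀ u u' j : ℕ, u < u' → j < α.f u' →
    ∀ (h : psum α u + j < n) (h' : psum α u' + j < n),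
      x⁻¹ ⟨psum α u + j, h⟩ < x⁻¹ ⟨psum α u' + j, h'⟩)

/-- Covering relation of the box order on LR-fillings. -/
def CovBox {α β γ : Partn} (X Y : SkFilling α β γ) : Prop :=
  IsLRF X ∧ IsLRF Y ∧ LeBox X Y ∧ X ≠ Y ∧
    ∀ W, IsLRF W → LeBox X W → LeBox W Y → W = X ∨ W = Y

/-- The decreasing block `(i, i-1, …, 1)`. -/
def descBlock (i : ℕ) : List ℕ := ((List.range i).reverse).map (· + 1)

section CoreAux
open Finset
attribute [local instance] Classical.propDecidable


noncomputable def cntP (φ : ℕ → Prop) (j : ℕ) : ℕ := ((Finset.range j).filter φ).card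

lemma cntP_succ (φ : ℕ → Prop) (j : ℕ) :
    cntP φ (j+1) = cntP φ j + if φ j then 1 else 0 := by
  unfold cntP
  rw [Finset.range_add_one, Finset.filter_insert]
  split_ifs with h
  · rw [Finset.card_insert_of_notMem (by simp)]
  · simp

lemma cntP_mono (φ : ℕ → Prop) {j j' : ℕ} (h : j ≤ j') : cntP φ j ≤ cntP φ j' :=
  Finset.card_le_card (Finset.filter_subset_filter _ (Finset.range_subset_range.2 h))

lemma cntP_congr (φ ψ : ℕ → Prop) (j : ℕ) (h : ∀ i, i < j → (φ i ↔ ψ i)) :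
    cntP φ j = cntP ψ j := by
  unfold cntP
  congr 1
  apply Finset.filter_congr
  intro i hi
  simpa using h i (Finset.mem_range.mp hi)

lemma cntP_shrink (φ : ℕ → Prop) {j j' : ℕ} (h : j ≤ j') (h2 : ∀ i, i < j' → φ i → i < j) :
    cntP φ j' = cntP φ j := by
  unfold cntP
  congr 1
  apply Finset.ext
  intro i
  simp only [Finset.mem_filter, Finset.mem_range]
  constructor
  · rintro ⟨hi, hφ⟩; exact ⟨h2 i hi hφ, hφ⟩
  · rintro ⟨hi, hφ⟩; exact ⟨lt_of_lt_of_le hi h, hφ⟩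

lemma cntP_split (φ ψ : ℕ → Prop) (hdis : ∀ i, ¬ (φ i ∧ ψ i)) (j : ℕ) :
    cntP (fun i => φ i ∨ ψ i) j = cntP φ j + cntP ψ j := by
  induction j with
  | zero => simp [cntP]
  | succ j ih =>
    rw [cntP_succ, cntP_succ, cntP_succ, ih]
    have := hdis j
    split_ifs <;> first | omega | tauto

lemma cntP_pos (φ : ℕ → Prop) (j i : ℕ) (hi : i < j) (hφ : φ i) : 1 ≤ cntP φ j := by
  unfold cntP
  exact Finset.card_pos.2 ⟨i, Finset.mem_filter.2 ⟨Finset.mem_range.2 hi, hφ⟩⟩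

/-- swap two positions of a word -/
def swapf (x : ℕ → ℕ) (P Q : ℕ) : ℕ → ℕ :=
  fun i => if i = P then x Q else if i = Q then x P else x i

section Core

variable (R : ℕ → Prop)

noncomputable def wcnt (w : ℕ → ℕ) (u j : ℕ) : ℕ := cntP (fun i => R i ∧ w i ≤ u) j
noncomputable def wval (w : ℕ → ℕ) (v j : ℕ) : ℕ := cntP (fun i => R i ∧ w i = v) j

lemma wcnt_split (w : ℕ → ℕ) (u j : ℕ) :
    wcnt R w (u+1) j = wcnt R w u j + wval R w (u+1) j := by
  have hiff : ∀ i, (R i ∧ w i ≤ u + 1) ↔ ((R i ∧ w i ≤ u) ∨ (R i ∧ w i = u + 1)) := by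
    intro i
    constructor
    · rintro ⟨h1, h2⟩
      by_cases h : w i = u + 1
      · exact Or.inr ⟨h1, h⟩
      · exact Or.inl ⟨h1, by omega⟩
    · rintro (⟨h1, h2⟩ | ⟨h1, h2⟩) <;> exact ⟨h1, by omega⟩
  rw [wcnt, wval, wcnt, cntP_congr _ _ j (fun i _ => hiff i)]
  exact cntP_split _ _ (by rintro i ⟨⟨_, h1⟩, ⟨_, h2⟩⟩; omega) j

lemma wcnt_telescope (w : ℕ → ℕ) (u u' j : ℕ) (h : u ≤ u') :
    wcnt R w u' j = wcnt R w u j + ∑ v ∈ Finset.Ioc u u', wval R w v j := by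
  induction u', h using Nat.le_induction with
  | base => simp
  | succ u' hu ih =>
    rw [wcnt_split, ih, Finset.sum_Ioc_succ_top (by omega), add_assoc]

lemma swapf_same {x : ℕ → ℕ} {P Q : ℕ} (u : ℕ) (R : ℕ → Prop) (h1 : x P ≤ u ↔ x Q ≤ u) :
    ∀ i, (R i ∧ swapf x P Q i ≤ u) ↔ (R i ∧ x i ≤ u) := by
  intro i
  unfold swapf
  split_ifs with e1 e2
  · subst e1; constructor <;> rintro ⟨hr, hw⟩ <;> exact ⟨hr, by tauto⟩
  · subst e2; constructor <;> rintro ⟨hr, hw⟩ <;> exact ⟨hr, by tauto⟩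
  · exact Iff.rfl

lemma swapf_P (x : ℕ → ℕ) (P Q : ℕ) : swapf x P Q P = x Q := by
  unfold swapf; rw [if_pos rfl]

lemma swapf_Q (x : ℕ → ℕ) {P Q : ℕ} (h : P ≠ Q) : swapf x P Q Q = x P := by
  unfold swapf; rw [if_neg (Ne.symm h), if_pos rfl]

lemma swapf_other (x : ℕ → ℕ) {P Q i : ℕ} (h1 : i ≠ P) (h2 : i ≠ Q) :
    swapf x P Q i = x i := by
  unfold swapf; rw [if_neg h1, if_neg h2]

lemma swap_cnt (x : ℕ → ℕ) (P Q : ℕ) (hPQ : P < Q) (hRP : R P) (hRQ : R Q)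
    (hlt : x P < x Q) (u j : ℕ) :
    wcnt R (swapf x P Q) u j + (if P < j ∧ j ≤ Q ∧ x P ≤ u ∧ u < x Q then 1 else 0)
      = wcnt R x u j := by
  induction j with
  | zero => simp [wcnt, cntP]
  | succ j ih =>
    rw [wcnt, wcnt, cntP_succ, cntP_succ, ← wcnt, ← wcnt]
    rcases eq_or_ne j P with hjP | hjP
    · rw [hjP] at ih ⊢
      rw [swapf_P]
      simp only [hRP, true_and]
      split_ifs at ih ⊢ <;> omega
    · rcases eq_or_ne j Q with hjQ | hjQ
      · rw [hjQ] at ih ⊢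
        rw [swapf_Q x (by omega : P ≠ Q)]
        simp only [hRQ, true_and]
        split_ifs at ih ⊢ <;> omega
      · rw [swapf_other x hjP hjQ]
        by_cases hj : R j ∧ x j ≤ u
        · rw [if_pos hj]
          split_ifs at ih ⊢ <;> omega
        · rw [if_neg hj]
          split_ifs at ih ⊢ <;> omega

lemma swap_val (x : ℕ → ℕ) (P Q : ℕ) (hPQ : P < Q) (hRP : R P) (hRQ : R Q)
    (hlt : x P < x Q) (v j : ℕ) :
    wval R (swapf x P Q) v j + (if P < j ∧ j ≤ Q ∧ v = x P then 1 else 0)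
      = wval R x v j + (if P < j ∧ j ≤ Q ∧ v = x Q then 1 else 0) := by
  induction j with
  | zero => simp [wval, cntP]
  | succ j ih =>
    rw [wval, wval, cntP_succ, cntP_succ, ← wval, ← wval]
    rcases eq_or_ne j P with hjP | hjP
    · rw [hjP] at ih ⊢
      rw [swapf_P]
      simp only [hRP, true_and]
      split_ifs at ih ⊢ <;> omega
    · rcases eq_or_ne j Q with hjQ | hjQ
      · rw [hjQ] at ih ⊢
        rw [swapf_Q x (by omega : P ≠ Q)]
        simp only [hRQ, true_and]
        split_ifs at ih ⊢ <;> omega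
      · rw [swapf_other x hjP hjQ]
        by_cases hj : R j ∧ x j = v
        · rw [if_pos hj]
          split_ifs at ih ⊢ <;> omega
        · rw [if_neg hj]
          split_ifs at ih ⊢ <;> omega

lemma core_swap (N : ℕ) (hRN : ∀ i, R i → i < N)
    (x z : ℕ → ℕ)
    (hx1 : ∀ i, R i → 1 ≤ x i)
    (hcont : ∀ v, 1 ≤ v → wval R x v N = wval R z v N)
    (latx : ∀ v j, 2 ≤ v → wval R x v j ≤ wval R x (v-1) j)
    (latz : ∀ v j, 2 ≤ v → wval R z v j ≤ wval R z (v-1) j)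
    (hdom : ∀ u j, wcnt R z u j ≤ wcnt R x u j)
    (hne : ∃ i, R i ∧ x i ≠ z i) :
    ∃ P Q, R P ∧ R Q ∧ P < Q ∧ x P < x Q ∧
      (∀ v j, 2 ≤ v → wval R (swapf x P Q) v j ≤ wval R (swapf x P Q) (v-1) j) ∧
      (∀ u j, wcnt R z u j ≤ wcnt R (swapf x P Q) u j) ∧
      (∀ u j, wcnt R (swapf x P Q) u j ≤ wcnt R x u j) ∧
      (∀ v j, Q < j → wval R (swapf x P Q) v j = wval R x v j) ∧
      wcnt R (swapf x P Q) (x P) (P+1) < wcnt R x (x P) (P+1) := by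
  -- the first differing row
  set i0 := Nat.find hne with hi0def
  obtain ⟨hRi0, hnei0⟩ : R i0 ∧ x i0 ≠ z i0 := Nat.find_spec hne
  have hpre : ∀ i, i < i0 → R i → x i = z i := by
    intro i hi hR
    by_contra h
    exact Nat.find_min hne hi ⟨hR, h⟩
  have hpreC : ∀ u j, j ≤ i0 → wcnt R x u j = wcnt R z u j := by
    intro u j hj
    apply cntP_congr
    intro i hi
    constructor <;> rintro ⟨h1, h2⟩ <;>
      [exact ⟨h1, by rw [← hpre i (by omega) h1]; exact h2⟩;
       exact ⟨h1, by rw [hpre i (by omega) h1]; exact h2⟩]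
  have hpreV : ∀ v j, j ≤ i0 → wval R x v j = wval R z v j := by
    intro v j hj
    apply cntP_congr
    intro i hi
    constructor <;> rintro ⟨h1, h2⟩ <;>
      [exact ⟨h1, by rw [← hpre i (by omega) h1]; exact h2⟩;
       exact ⟨h1, by rw [hpre i (by omega) h1]; exact h2⟩]
  set c := z i0 with hcdef
  -- x i0 < z i0
  have hac : x i0 < c := by
    by_contra hcon
    have hlt : c < x i0 := by omega
    have h1 : wcnt R z c (i0+1) = wcnt R z c i0 + 1 := by
      rw [wcnt, cntP_succ, ← wcnt, if_pos ⟨hRi0, le_refl c⟩]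
    have h2 : wcnt R x c (i0+1) = wcnt R x c i0 + 0 := by
      rw [wcnt, cntP_succ, ← wcnt, if_neg (fun hh => by omega)]
    have h3 := hdom c (i0+1)
    have h4 := hpreC c i0 le_rfl
    omega
  have hc2 : 2 ≤ c := by have := hx1 i0 hRi0; omega
  -- existence of a row ≥ i0 with x-entry c
  have hQex : ∃ i, R i ∧ i0 < i ∧ x i = c := by
    by_contra hno
    push_neg at hno
    have hshr : wval R x c N = wval R x c (i0+1) := by
      apply cntP_shrink _ (by have := hRN i0 hRi0; omega)
      rintro i hi ⟨h1, h2⟩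
      rcases Nat.lt_or_ge i (i0+1) with h | h
      · exact h
      · exact absurd h2 (hno i h1 (by omega))
    have h1 : wval R x c (i0+1) = wval R x c i0 + 0 := by
      rw [wval, cntP_succ, ← wval, if_neg (fun hh => by omega)]
    have h2 : wval R z c (i0+1) = wval R z c i0 + 1 := by
      rw [wval, cntP_succ, ← wval, if_pos ⟨hRi0, rfl⟩]
    have h3 : wval R z c (i0+1) ≤ wval R z c N :=
      cntP_mono _ (by have := hRN i0 hRi0; omega)
    have h4 := hcont c (by omega)
    have h5 := hpreV c i0 le_rfl
    omega
  set Q := Nat.find hQex with hQdef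
  obtain ⟨hRQ, hi0Q, hxQ⟩ : R Q ∧ i0 < Q ∧ x Q = c := Nat.find_spec hQex
  have hQmin : ∀ i, i < Q → ¬(R i ∧ i0 < i ∧ x i = c) := fun i hi => Nat.find_min hQex hi
  have hwin_nc : ∀ i, R i → i0 ≤ i → i < Q → x i ≠ c := by
    intro i hR hi1 hi2 hxc
    rcases eq_or_lt_of_le hi1 with h | h
    · rw [← h] at hxc; omega
    · exact hQmin i hi2 ⟨hR, h, hxc⟩
  -- the window finset and the maximal value d in it
  have hW : (Finset.filter (fun i => R i ∧ i0 ≤ i ∧ x i < c) (Finset.range Q)).Nonempty := by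
    refine ⟨i0, Finset.mem_filter.2 ⟨Finset.mem_range.2 hi0Q, hRi0, le_rfl, hac⟩⟩
  set W := Finset.filter (fun i => R i ∧ i0 ≤ i ∧ x i < c) (Finset.range Q) with hWdef
  set d := W.sup' hW x with hddef
  have hW2 : (W.filter (fun i => x i = d)).Nonempty := by
    obtain ⟨b, hb, hbd⟩ := Finset.exists_mem_eq_sup' hW x
    exact ⟨b, Finset.mem_filter.2 ⟨hb, hbd.symm⟩⟩
  set P := (W.filter (fun i => x i = d)).max' hW2 with hPdef
  have hPW : P ∈ W.filter (fun i => x i = d) := Finset.max'_mem _ hW2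
  have hPW' : P ∈ W := (Finset.mem_filter.1 hPW).1
  obtain ⟨hPQ', hRP, hi0P, hPc⟩ : P < Q ∧ R P ∧ i0 ≤ P ∧ x P < c := by
    have h := Finset.mem_filter.1 hPW'
    exact ⟨Finset.mem_range.1 h.1, h.2.1, h.2.2.1, h.2.2.2⟩
  have hxPd : x P = d := (Finset.mem_filter.1 hPW).2
  have hda : x i0 ≤ d := Finset.le_sup' x (Finset.mem_filter.2
    ⟨Finset.mem_range.2 hi0Q, hRi0, le_rfl, hac⟩)
  have hdc : d < c := by rw [← hxPd]; exact hPc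
  have hd1 : 1 ≤ d := le_trans (hx1 i0 hRi0) hda
  have hdmax : ∀ i, R i → i0 ≤ i → i < Q → x i < c → x i ≤ d := by
    intro i h1 h2 h3 h4
    exact Finset.le_sup' x (Finset.mem_filter.2 ⟨Finset.mem_range.2 h3, h1, h2, h4⟩)
  -- stability: values in (d, c] do not occur in x within the window
  have hstab : ∀ v, d < v → v ≤ c → ∀ j, i0 ≤ j → j ≤ Q → wval R x v j = wval R x v i0 := by
    intro v hdv hvc j hj1 hj2
    apply cntP_shrink _ hj1
    rintro i hi ⟨h1, h2⟩
    by_contra hcon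
    push_neg at hcon
    have hiQ : i < Q := by omega
    rcases eq_or_lt_of_le hvc with h | h
    · exact hwin_nc i h1 (by omega) hiQ (by omega)
    · have := hdmax i h1 (by omega) hiQ (by omega)
      omega
  -- F3: strict gap at level c-1 throughout the window
  have hvalcx : ∀ j, i0 < j → j ≤ Q → wval R x c j = wval R x c i0 :=
    fun j h1 h2 => hstab c hdc le_rfl j (by omega) h2
  have hF3 : ∀ j, i0 < j → j ≤ Q → wcnt R z (c-1) j + 1 ≤ wcnt R x (c-1) j := by
    intro j h1 h2
    have hs1 : wcnt R x c j = wcnt R x (c-1) j + wval R x c j := by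
      have := wcnt_split R x (c-1) j
      rwa [show c - 1 + 1 = c by omega] at this
    have hs2 : wcnt R z c j = wcnt R z (c-1) j + wval R z c j := by
      have := wcnt_split R z (c-1) j
      rwa [show c - 1 + 1 = c by omega] at this
    have hz1 : wval R z c (i0+1) = wval R z c i0 + 1 := by
      rw [wval, cntP_succ, ← wval, if_pos ⟨hRi0, rfl⟩]
    have hz2 : wval R z c (i0+1) ≤ wval R z c j := cntP_mono _ (by omega)
    have hx1' := hvalcx j h1 h2
    have hx2 := hpreV c i0 le_rfl
    have hd' := hdom c j
    omega
  -- F4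
  have hF4 : wval R x c i0 + 1 ≤ wval R x (c-1) i0 := by
    have hl := latz c (i0+1) hc2
    have hz1 : wval R z c (i0+1) = wval R z c i0 + 1 := by
      rw [wval, cntP_succ, ← wval, if_pos ⟨hRi0, rfl⟩]
    have hz2 : wval R z (c-1) (i0+1) = wval R z (c-1) i0 + 0 := by
      rw [wval, cntP_succ, ← wval, if_neg (fun hh => by omega)]
    have h1 := hpreV c i0 le_rfl
    have h2 := hpreV (c-1) i0 le_rfl
    omega
  -- the rectangle estimate
  have hrect : ∀ u j, d ≤ u → u < c → i0 < j → j ≤ Q → wcnt R z u j + 1 ≤ wcnt R x u j := by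
    intro u j hu1 hu2 hj1 hj2
    have ht1 : wcnt R x (c-1) j = wcnt R x u j + ∑ v ∈ Finset.Ioc u (c-1), wval R x v j :=
      wcnt_telescope R x u (c-1) j (by omega)
    have ht2 : wcnt R z (c-1) j = wcnt R z u j + ∑ v ∈ Finset.Ioc u (c-1), wval R z v j :=
      wcnt_telescope R z u (c-1) j (by omega)
    have hsum : ∑ v ∈ Finset.Ioc u (c-1), wval R x v j ≤
        ∑ v ∈ Finset.Ioc u (c-1), wval R z v j := by
      apply Finset.sum_le_sum
      intro v hv
      have hv' := Finset.mem_Ioc.1 hv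
      have e1 : wval R x v j = wval R x v i0 :=
        hstab v (by omega) (by omega) j (by omega) hj2
      have e2 := hpreV v i0 le_rfl
      have e3 : wval R z v i0 ≤ wval R z v j := cntP_mono _ (by omega)
      omega
    have := hF3 j hj1 hj2
    omega
  -- now the swap
  have hlt : x P < x Q := by rw [hxPd, hxQ]; exact hdc
  have hPQ : P < Q := hPQ'
  refine ⟨P, Q, hRP, hRQ, hPQ, hlt, ?_, ?_, ?_, ?_, ?_⟩
  · -- lattice property of the swapped word
    intro v j hv2
    by_cases hj : P < j ∧ j ≤ Q
    · have hi0j : i0 < j := by omega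
      have hsv : ∀ v', wval R (swapf x P Q) v' j + (if v' = d then 1 else 0)
          = wval R x v' j + (if v' = c then 1 else 0) := by
        intro v'
        have h := swap_val R x P Q hPQ hRP hRQ hlt v' j
        rw [hxPd, hxQ] at h
        split_ifs at h ⊢ <;> omega
      have h1 := hsv v
      have h2 := hsv (v-1)
      have hA1 : wval R x c j = wval R x c i0 := hvalcx j hi0j hj.2
      have hA3 : wval R x (c-1) i0 ≤ wval R x (c-1) j := cntP_mono _ (by omega)
      have hA4 : wval R x d i0 + 1 ≤ wval R x d j := by
        have m1 : wval R x d i0 ≤ wval R x d P := cntP_mono _ hi0P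
        have m2 : wval R x d (P+1) = wval R x d P + 1 := by
          rw [wval, cntP_succ, ← wval, if_pos ⟨hRP, hxPd⟩]
        have m3 : wval R x d (P+1) ≤ wval R x d j := cntP_mono _ (by omega)
        omega
      by_cases hvc : v = c
      · subst hvc
        have k1 : wval R (swapf x P Q) c j = wval R x c j + 1 := by
          have hk := hsv c
          split_ifs at hk <;> omega
        by_cases hdc1 : d = c - 1
        · have k2 : wval R (swapf x P Q) (c-1) j + 1 = wval R x (c-1) j := by
            have hk := hsv (c-1)
            split_ifs at hk <;> omega
          have k3 : wval R x (c-1) i0 + 1 ≤ wval R x (c-1) j := by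
            have := hA4
            rwa [hdc1] at this
          omega
        · have k2 : wval R (swapf x P Q) (c-1) j = wval R x (c-1) j := by
            have hk := hsv (c-1)
            split_ifs at hk <;> omega
          omega
      · by_cases hvd : v = d
        · subst hvd
          have hlx := latx d j hv2
          split_ifs at h1 h2 <;> omega
        · by_cases hvc1 : v = c + 1
          · subst hvc1
            have hlx := latx (c+1) j (by omega)
            rw [show c + 1 - 1 = c by omega] at hlx h2 ⊢
            split_ifs at h1 h2 <;> omega
          · by_cases hvd1 : v = d + 1
            · -- here d + 1 < c since v ≠ c
              subst hvd1
              have hdc2 : d + 1 < c := by omega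
              have e1 : wval R x (d+1) j = wval R x (d+1) i0 :=
                hstab (d+1) (by omega) (by omega) j (by omega) hj.2
              have e2 := hpreV (d+1) i0 le_rfl
              have e3 : wval R z (d+1) i0 ≤ wval R z d i0 := by
                have := latz (d+1) i0 (by omega)
                rwa [show d + 1 - 1 = d by omega] at this
              have e4 := hpreV d i0 le_rfl
              rw [show d + 1 - 1 = d by omega] at h2 ⊢
              split_ifs at h1 h2 <;> omega
            · have hlx := latx v j hv2
              have hne1 : ¬ (v - 1 = d) := by omega
              have hne2 : ¬ (v - 1 = c) := by omega
              split_ifs at h1 h2 <;> omega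
    · -- outside the window : counts unchanged
      have hsv : ∀ v', wval R (swapf x P Q) v' j = wval R x v' j := by
        intro v'
        have h := swap_val R x P Q hPQ hRP hRQ hlt v' j
        rw [if_neg (fun hh => hj ⟨hh.1, hh.2.1⟩), if_neg (fun hh => hj ⟨hh.1, hh.2.1⟩)] at h
        omega
      rw [hsv v, hsv (v-1)]
      exact latx v j hv2
  · -- dominance over z
    intro u j
    have h := swap_cnt R x P Q hPQ hRP hRQ hlt u j
    by_cases hcond : P < j ∧ j ≤ Q ∧ x P ≤ u ∧ u < x Q
    · rw [if_pos hcond] at h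
      have := hrect u j (by rw [← hxPd]; exact hcond.2.2.1) (by rw [← hxQ]; exact hcond.2.2.2)
        (by omega) hcond.2.1
      omega
    · rw [if_neg hcond] at h
      have := hdom u j
      omega
  · -- below x
    intro u j
    have h := swap_cnt R x P Q hPQ hRP hRQ hlt u j
    split_ifs at h <;> omega
  · -- values beyond Q unchanged
    intro v j hQj
    have h := swap_val R x P Q hPQ hRP hRQ hlt v j
    rw [if_neg (fun hh => by omega), if_neg (fun hh => by omega)] at h
    omega
  · -- strict decrease
    have h := swap_cnt R x P Q hPQ hRP hRQ hlt (x P) (P+1)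
    rw [if_pos ⟨by omega, by omega, le_rfl, hlt⟩] at h
    omega

end Core

end CoreAux

section Bridge
open Finset
attribute [local instance] Classical.propDecidable

variable (β γ : Partn)

/-- rows of the rook strip that contain a box -/
def Rw (i : ℕ) : Prop := γ.f i < β.f i

lemma mem_cells (hv : VertStrip β γ) (i j : ℕ) :
    (i, j) ∈ SkewCells β γ ↔ (Rw β γ i ∧ j = γ.f i) := by
  have hmem : ((i, j) ∈ SkewCells β γ) ↔ (γ.f i ≤ j ∧ j < β.f i) := Iff.rfl
  have h := hv i
  rw [hmem]
  simp only [Rw]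
  omega

lemma col_strict (hsub : PartnSub γ β) (hh : HorizStrip β γ) (i i' : ℕ)
    (hii : i < i') (h1 : Rw β γ i) (h2 : Rw β γ i') : γ.f i' < γ.f i := by
  rcases lt_or_eq_of_le (γ.antitone' (le_of_lt hii)) with h | h
  · exact h
  exfalso
  set jj := γ.f i' with hjj
  have hji : γ.f i = jj := h.symm
  obtain ⟨Nb, hNb⟩ := β.finite_supp
  have hfinβ : {k | jj < β.f k}.Finite := by
    apply Set.Finite.subset (Set.finite_Iio Nb)
    intro k hk
    simp only [Set.mem_setOf_eq] at hk
    simp only [Set.mem_Iio]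
    by_contra hcon
    rw [hNb k (by omega)] at hk
    omega
  have hfinγ : {k | jj < γ.f k}.Finite := by
    apply hfinβ.subset
    intro k hk
    simp only [Set.mem_setOf_eq] at hk ⊢
    exact lt_of_lt_of_le hk (hsub k)
  have hnm1 : i' ∉ {k | jj < γ.f k} := by simp [Set.mem_setOf_eq]; omega
  have hnm2 : i ∉ insert i' {k | jj < γ.f k} := by
    simp only [Set.mem_insert_iff, Set.mem_setOf_eq]
    push_neg
    exact ⟨by omega, by omega⟩
  have hsubset : insert i (insert i' {k | jj < γ.f k}) ⊆ {k | jj < β.f k} := by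
    intro k hk
    simp only [Set.mem_insert_iff, Set.mem_setOf_eq] at hk ⊢
    rcases hk with rfl | rfl | hk
    · simp only [Rw] at h1; omega
    · simp only [Rw] at h2; omega
    · exact lt_of_lt_of_le hk (hsub k)
  have hc1 : (insert i (insert i' {k | jj < γ.f k})).ncard
      = {k | jj < γ.f k}.ncard + 2 := by
    rw [Set.ncard_insert_of_notMem hnm2 ((hfinγ.insert i').subset (by simp)),
      Set.ncard_insert_of_notMem hnm1 hfinγ]
  have hc2 : (insert i (insert i' {k | jj < γ.f k})).ncard ≤ {k | jj < β.f k}.ncard :=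
    Set.ncard_le_ncard hsubset hfinβ
  have hc3 := hh jj
  simp only [ptranspose] at hc3
  omega

variable (N : ℕ)

/-- cardinality of a cell set cut out by a row predicate -/
lemma ncard_filter_cells (hN : ∀ i, Rw β γ i → i < N) (hv : VertStrip β γ) (φ : ℕ × ℕ → Prop) :
    {p | p ∈ SkewCells β γ ∧ φ p}.ncard
      = cntP (fun i => Rw β γ i ∧ φ (i, γ.f i)) N := by
  have hset : {p | p ∈ SkewCells β γ ∧ φ p}
      = (fun i => (i, γ.f i)) '' {i : ℕ | i < N ∧ Rw β γ i ∧ φ (i, γ.f i)} := by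
    ext ⟨i, j⟩
    simp only [Set.mem_setOf_eq, Set.mem_image, mem_cells β γ hv]
    constructor
    · rintro ⟨⟨hR, rfl⟩, hφ⟩
      exact ⟨i, ⟨hN i hR, hR, hφ⟩, rfl⟩
    · rintro ⟨i', ⟨hi', hR, hφ⟩, heq⟩
      obtain ⟨rfl, rfl⟩ : i' = i ∧ γ.f i' = j :=
        ⟨congrArg Prod.fst heq, congrArg Prod.snd heq⟩
      exact ⟨⟨hR, rfl⟩, hφ⟩
  rw [hset, Set.ncard_image_of_injOn (fun a _ b _ hab => congrArg Prod.fst hab)]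
  have h2 : {i : ℕ | i < N ∧ Rw β γ i ∧ φ (i, γ.f i)}
      = ↑((Finset.range N).filter (fun i => Rw β γ i ∧ φ (i, γ.f i))) := by
    ext i
    simp [Finset.mem_coe, Finset.mem_filter, Finset.mem_range, Set.mem_setOf_eq]
  rw [h2, Set.ncard_coe_finset, cntP]
  congr

/-- the row word of a filling -/
def wordOf {α : Partn} (F : SkFilling α β γ) : ℕ → ℕ := fun i => F.entry (i, γ.f i)

lemma regionRow_eq {α : Partn} (hv : VertStrip β γ) (F : SkFilling α β γ) (u i : ℕ) :
    regionRow F u i = γ.f i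
      + (if Rw β γ i ∧ wordOf β γ F i ≤ u then 1 else 0) := by
  unfold regionRow
  congr 1
  split_ifs with hc
  · have : {j | (i, j) ∈ SkewCells β γ ∧ F.entry (i, j) ≤ u} = {γ.f i} := by
      ext j
      simp only [Set.mem_setOf_eq, Set.mem_singleton_iff, mem_cells β γ hv]
      constructor
      · rintro ⟨⟨_, rfl⟩, _⟩; rfl
      · rintro rfl; exact ⟨⟨hc.1, rfl⟩, hc.2⟩
    rw [this, Set.ncard_singleton]
  · have : {j | (i, j) ∈ SkewCells β γ ∧ F.entry (i, j) ≤ u} = ∅ := by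
      ext j
      simp only [Set.mem_setOf_eq, Set.mem_empty_iff_false, iff_false, not_and,
        mem_cells β γ hv]
      rintro ⟨hR, rfl⟩ hle
      exact hc ⟨hR, hle⟩
    rw [this, Set.ncard_empty]

lemma sum_regionRow {α : Partn} (hv : VertStrip β γ) (F : SkFilling α β γ) (u j : ℕ) :
    ∑ i ∈ Finset.range j, regionRow F u i
      = (∑ i ∈ Finset.range j, γ.f i) + wcnt (Rw β γ) (wordOf β γ F) u j := by
  have h1 : ∀ i ∈ Finset.range j, regionRow F u i
      = γ.f i + (if Rw β γ i ∧ wordOf β γ F i ≤ u then 1 else 0) :=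
    fun i _ => regionRow_eq β γ hv F u i
  rw [Finset.sum_congr rfl h1, Finset.sum_add_distrib]
  congr 1
  rw [wcnt, cntP, Finset.card_filter]
  exact Finset.sum_congr rfl (fun i _ => by congr 1)

lemma dom_iff {α : Partn} (hv : VertStrip β γ) (Z X : SkFilling α β γ) :
    DomLE Z X ↔ ∀ u j, wcnt (Rw β γ) (wordOf β γ Z) u j ≤ wcnt (Rw β γ) (wordOf β γ X) u j := by
  constructor
  · intro h u j
    have := h u j
    rw [sum_regionRow β γ hv, sum_regionRow β γ hv] at this
    omega
  · intro h u j
    rw [sum_regionRow β γ hv, sum_regionRow β γ hv]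
    have := h u j
    omega

lemma content_eq {α : Partn} (hN : ∀ i, Rw β γ i → i < N) (hv : VertStrip β γ) (F : SkFilling α β γ) (v : ℕ) (hv1 : 1 ≤ v) :
    wval (Rw β γ) (wordOf β γ F) v N = α.f (v - 1) := by
  have h := F.content v hv1
  rw [← h]
  have h2 := ncard_filter_cells β γ N hN hv (fun p => F.entry p = v)
  rw [show {c | c ∈ SkewCells β γ ∧ F.entry c = v} = {c ∈ SkewCells β γ | F.entry c = v} from rfl] at h2
  rw [h2, wval]
  rfl

/-- matching a column threshold with a row prefix -/
lemma match_count (hN : ∀ i, Rw β γ i → i < N) (w : ℕ → ℕ) (v cc j : ℕ)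
    (hmatch : ∀ i, Rw β γ i → (cc ≤ γ.f i ↔ i < j)) :
    cntP (fun i => Rw β γ i ∧ cc ≤ γ.f i ∧ w i = v) N = wval (Rw β γ) w v j := by
  rw [wval]
  unfold cntP
  congr 1
  apply Finset.ext
  intro i
  simp only [Finset.mem_filter, Finset.mem_range]
  constructor
  · rintro ⟨hi, hR, hcc, hw⟩
    exact ⟨(hmatch i hR).1 hcc, hR, hw⟩
  · rintro ⟨hi, hR, hw⟩
    exact ⟨hN i hR, hR, (hmatch i hR).2 hi, hw⟩

lemma exists_cc (hsub : PartnSub γ β) (hh : HorizStrip β γ) (j : ℕ) :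
    ∃ cc, ∀ i, Rw β γ i → (cc ≤ γ.f i ↔ i < j) := by
  by_cases hU : ∃ i, Rw β γ i ∧ j ≤ i
  · obtain ⟨m, ⟨hRm, hjm⟩, hmin⟩ :
        ∃ m, (Rw β γ m ∧ j ≤ m) ∧ ∀ i' < m, ¬(Rw β γ i' ∧ j ≤ i') :=
      ⟨Nat.find hU, Nat.find_spec hU, fun i' h => Nat.find_min hU h⟩
    refine ⟨γ.f m + 1, fun i hR => ?_⟩
    constructor
    · intro hcc
      by_contra hcon
      push_neg at hcon
      have him : m ≤ i := by
        by_contra hmi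
        push_neg at hmi
        exact hmin i hmi ⟨hR, by omega⟩
      rcases eq_or_lt_of_le him with h | h
      · rw [← h] at hcc; omega
      · have := γ.antitone' (le_of_lt h)
        omega
    · intro hij
      have him : i < m := by
        by_contra hmi
        push_neg at hmi
        rcases eq_or_lt_of_le hmi with h | h
        · omega
        · omega
      have := col_strict β γ hsub hh i m him hR hRm
      omega
  · push_neg at hU
    refine ⟨0, fun i hR => ?_⟩
    simp only [Nat.zero_le, true_iff]
    have := hU i hR
    omega

lemma exists_j (hN : ∀ i, Rw β γ i → i < N) (cc : ℕ) :
    ∃ j, ∀ i, Rw β γ i → (cc ≤ γ.f i ↔ i < j) := by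
  by_cases hT : ∃ i, Rw β γ i ∧ γ.f i < cc
  · obtain ⟨m, ⟨hRm, hmcc⟩, hmin⟩ :
        ∃ m, (Rw β γ m ∧ γ.f m < cc) ∧ ∀ i' < m, ¬(Rw β γ i' ∧ γ.f i' < cc) :=
      ⟨Nat.find hT, Nat.find_spec hT, fun i' h => Nat.find_min hT h⟩
    refine ⟨m, fun i hR => ?_⟩
    constructor
    · intro hcc
      by_contra hcon
      push_neg at hcon
      have := γ.antitone' hcon
      omega
    · intro him
      by_contra hcon
      push_neg at hcon
      exact hmin i him ⟨hR, by omega⟩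
  · push_neg at hT
    refine ⟨N, fun i hR => ?_⟩
    have h1 := hT i hR
    have h2 := hN i hR
    constructor <;> intro <;> omega

/-- extracting the lattice property of the reading word from an LR filling -/
lemma lrf_lattice {α : Partn} (hN : ∀ i, Rw β γ i → i < N) (hsub : PartnSub γ β) (hv : VertStrip β γ)
    (hh : HorizStrip β γ) (F : SkFilling α β γ) (hF : IsLRF F) :
    ∀ v j, 2 ≤ v → wval (Rw β γ) (wordOf β γ F) v j ≤ wval (Rw β γ) (wordOf β γ F) (v-1) j := by
  intro v j hv2
  obtain ⟨cc, hcc⟩ := exists_cc β γ hsub hh j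
  rw [← match_count β γ N hN _ v cc j hcc, ← match_count β γ N hN _ (v-1) cc j hcc]
  have h := hF.2.2 v cc hv2
  have e1 := ncard_filter_cells β γ N hN hv (fun p => cc ≤ p.2 ∧ F.entry p = v)
  have e2 := ncard_filter_cells β γ N hN hv (fun p => cc ≤ p.2 ∧ F.entry p = v - 1)
  rw [show {p_1 ∈ SkewCells β γ | cc ≤ p_1.2 ∧ F.entry p_1 = v}
      = {p | p ∈ SkewCells β γ ∧ cc ≤ p.2 ∧ F.entry p = v} from rfl, e1] at h
  rw [show {p_1 ∈ SkewCells β γ | cc ≤ p_1.2 ∧ F.entry p_1 = v - 1}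
      = {p | p ∈ SkewCells β γ ∧ cc ≤ p.2 ∧ F.entry p = v - 1} from rfl, e2] at h
  exact h

lemma filling_ext {α : Partn} (hv : VertStrip β γ) (X Z : SkFilling α β γ)
    (h : ∀ i, Rw β γ i → X.entry (i, γ.f i) = Z.entry (i, γ.f i)) : X = Z := by
  have hent : X.entry = Z.entry := by
    funext p
    rcases p with ⟨i, j⟩
    by_cases hc : (i, j) ∈ SkewCells β γ
    · obtain ⟨hR, rfl⟩ := (mem_cells β γ hv i j).1 hc
      exact h i hR
    · rw [X.zero_outside _ hc, Z.zero_outside _ hc]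
  cases X; cases Z; simpa using hent

lemma entry_bound {α : Partn} (hN : ∀ i, Rw β γ i → i < N) (hv : VertStrip β γ)
    (Ba : ℕ) (hBa : ∀ v, Ba ≤ v → α.f v = 0) (F : SkFilling α β γ) :
    ∀ i, Rw β γ i → wordOf β γ F i ≤ Ba := by
  intro i hR
  by_contra hcon
  push_neg at hcon
  have h1 : 1 ≤ wval (Rw β γ) (wordOf β γ F) (wordOf β γ F i) N :=
    cntP_pos _ N i (hN i hR) ⟨hR, rfl⟩
  have h2 := content_eq β γ N hN hv F (wordOf β γ F i) (by omega)
  rw [hBa (wordOf β γ F i - 1) (by omega)] at h2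
  omega

lemma lrf_of_lattice {α : Partn} (hN : ∀ i, Rw β γ i → i < N) (hsub : PartnSub γ β)
    (hv : VertStrip β γ) (hh : HorizStrip β γ) (F : SkFilling α β γ)
    (hlat : ∀ v j, 2 ≤ v → wval (Rw β γ) (wordOf β γ F) v j
      ≤ wval (Rw β γ) (wordOf β γ F) (v-1) j) : IsLRF F := by
  refine ⟨?_, ?_, ?_⟩
  · intro i j j' hm hm' hjj
    obtain ⟨hR, rfl⟩ := (mem_cells β γ hv i j).1 hm
    obtain ⟨_, h2⟩ := (mem_cells β γ hv i j').1 hm'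
    rw [h2]
  · intro i i' j hm hm' hii
    obtain ⟨hR, rfl⟩ := (mem_cells β γ hv i j).1 hm
    obtain ⟨hR', h2⟩ := (mem_cells β γ hv i' (γ.f i)).1 hm'
    have := col_strict β γ hsub hh i i' hii hR hR'
    exact ((by omega : False)).elim
  · intro u cc hu2
    obtain ⟨j, hj⟩ := exists_j β γ N hN cc
    have e1 := ncard_filter_cells β γ N hN hv (fun p => cc ≤ p.2 ∧ F.entry p = u)
    have e2 := ncard_filter_cells β γ N hN hv (fun p => cc ≤ p.2 ∧ F.entry p = u - 1)
    rw [show {p ∈ SkewCells β γ | cc ≤ p.2 ∧ F.entry p = u}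
        = {p | p ∈ SkewCells β γ ∧ cc ≤ p.2 ∧ F.entry p = u} from rfl, e1,
      show {p ∈ SkewCells β γ | cc ≤ p.2 ∧ F.entry p = u - 1}
        = {p | p ∈ SkewCells β γ ∧ cc ≤ p.2 ∧ F.entry p = u - 1} from rfl, e2]
    have hres := hlat u j hu2
    rw [← match_count β γ N hN (wordOf β γ F) u cc j hj,
      ← match_count β γ N hN (wordOf β γ F) (u-1) cc j hj] at hres
    exact hres

lemma key {α : Partn} (hsub : PartnSub γ β) (hrook : RookStrip β γ)
    (hN : ∀ i, Rw β γ i → i < N)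
    (Ba : ℕ) (hBa : ∀ v, Ba ≤ v → α.f v = 0)
    (X Z : SkFilling α β γ) (hX : IsLRF X) (hZ : IsLRF Z)
    (hdomZX : DomLE Z X) (hne : Z ≠ X) :
    ∃ Y : SkFilling α β γ, IsLRF Y ∧ DomLE Z Y ∧ BoxMove X Y ∧
      (∀ u j, wcnt (Rw β γ) (wordOf β γ Y) u j ≤ wcnt (Rw β γ) (wordOf β γ X) u j) ∧
      ∃ u j, u < Ba + 1 ∧ j < N + 1 ∧
        wcnt (Rw β γ) (wordOf β γ Y) u j < wcnt (Rw β γ) (wordOf β γ X) u j := by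
  obtain ⟨hv, hh⟩ := hrook
  have hx1 : ∀ i, Rw β γ i → 1 ≤ wordOf β γ X i := fun i hR =>
    X.pos_inside (i, γ.f i) ((mem_cells β γ hv i (γ.f i)).2 ⟨hR, rfl⟩)
  have hcont : ∀ v, 1 ≤ v →
      wval (Rw β γ) (wordOf β γ X) v N = wval (Rw β γ) (wordOf β γ Z) v N := fun v hv1 => by
    rw [content_eq β γ N hN hv X v hv1, content_eq β γ N hN hv Z v hv1]
  have latx := lrf_lattice β γ N hN hsub hv hh X hX
  have latz := lrf_lattice β γ N hN hsub hv hh Z hZ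
  have hdom : ∀ u j, wcnt (Rw β γ) (wordOf β γ Z) u j ≤ wcnt (Rw β γ) (wordOf β γ X) u j :=
    (dom_iff β γ hv Z X).1 hdomZX
  have hnew : ∃ i, Rw β γ i ∧ wordOf β γ X i ≠ wordOf β γ Z i := by
    by_contra hcon
    push_neg at hcon
    exact hne (filling_ext β γ hv Z X (fun i hR => (hcon i hR).symm))
  obtain ⟨P, Q, hRP, hRQ, hPQ, hxPQ, ylat, ydom, yle, ybeyond, ystrict⟩ :=
    core_swap (Rw β γ) N hN (wordOf β γ X) (wordOf β γ Z) hx1 hcont latx latz hdom hnew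
  have hmemP : (P, γ.f P) ∈ SkewCells β γ := (mem_cells β γ hv P (γ.f P)).2 ⟨hRP, rfl⟩
  have hmemQ : (Q, γ.f Q) ∈ SkewCells β γ := (mem_cells β γ hv Q (γ.f Q)).2 ⟨hRQ, rfl⟩
  have hy1 : ∀ i, Rw β γ i → 1 ≤ swapf (wordOf β γ X) P Q i := by
    intro i hR
    unfold swapf
    split_ifs
    · exact hx1 Q hRQ
    · exact hx1 P hRP
    · exact hx1 i hR
  have hpos : ∀ c ∈ SkewCells β γ,
      1 ≤ (if c ∈ SkewCells β γ then swapf (wordOf β γ X) P Q c.1 else 0) := by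
    rintro ⟨i, j⟩ hc
    rw [if_pos hc]
    obtain ⟨hR, rfl⟩ := (mem_cells β γ hv i j).1 hc
    exact hy1 i hR
  have hcontY : ∀ u, 1 ≤ u →
      {c ∈ SkewCells β γ |
        (if c ∈ SkewCells β γ then swapf (wordOf β γ X) P Q c.1 else 0) = u}.ncard
      = α.f (u - 1) := by
    intro u hu
    have e := ncard_filter_cells β γ N hN hv
      (fun p => (if p ∈ SkewCells β γ then swapf (wordOf β γ X) P Q p.1 else 0) = u)
    rw [show {c ∈ SkewCells β γ |
        (if c ∈ SkewCells β γ then swapf (wordOf β γ X) P Q c.1 else 0) = u}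
      = {p | p ∈ SkewCells β γ ∧
        (if p ∈ SkewCells β γ then swapf (wordOf β γ X) P Q p.1 else 0) = u} from rfl, e]
    have e2 : cntP (fun i => Rw β γ i ∧
        (if ((i, γ.f i) : ℕ × ℕ) ∈ SkewCells β γ then swapf (wordOf β γ X) P Q (i, γ.f i).1 else 0) = u) N
        = wval (Rw β γ) (swapf (wordOf β γ X) P Q) u N := by
      apply cntP_congr
      intro i _
      constructor
      · rintro ⟨hR, hval⟩
        rw [if_pos ((mem_cells β γ hv i (γ.f i)).2 ⟨hR, rfl⟩)] at hval
        exact ⟨hR, hval⟩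
      · rintro ⟨hR, hval⟩
        rw [if_pos ((mem_cells β γ hv i (γ.f i)).2 ⟨hR, rfl⟩)]
        exact ⟨hR, hval⟩
    rw [e2, ybeyond u N (hN Q hRQ), content_eq β γ N hN hv X u hu]
  let Y : SkFilling α β γ := ⟨fun p => if p ∈ SkewCells β γ then swapf (wordOf β γ X) P Q p.1 else 0,
    fun c hc => if_neg hc, hpos, hcontY⟩
  have hYent : ∀ p, Y.entry p = if p ∈ SkewCells β γ then swapf (wordOf β γ X) P Q p.1 else 0 :=
    fun p => rfl
  have hwv : ∀ i, Rw β γ i → wordOf β γ Y i = swapf (wordOf β γ X) P Q i := by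
    intro i hR
    show Y.entry (i, γ.f i) = _
    rw [hYent, if_pos ((mem_cells β γ hv i (γ.f i)).2 ⟨hR, rfl⟩)]
  have hcntY : ∀ u j, wcnt (Rw β γ) (wordOf β γ Y) u j
      = wcnt (Rw β γ) (swapf (wordOf β γ X) P Q) u j := by
    intro u j
    apply cntP_congr
    intro i _
    constructor <;> rintro ⟨h1, h2⟩ <;> refine ⟨h1, ?_⟩
    · rwa [← hwv i h1]
    · rwa [hwv i h1]
  have hvalY : ∀ v j, wval (Rw β γ) (wordOf β γ Y) v j
      = wval (Rw β γ) (swapf (wordOf β γ X) P Q) v j := by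
    intro v j
    apply cntP_congr
    intro i _
    constructor <;> rintro ⟨h1, h2⟩ <;> refine ⟨h1, ?_⟩
    · rwa [← hwv i h1]
    · rwa [hwv i h1]
  refine ⟨Y, ?_, ?_, ?_, ?_, ?_⟩
  · -- IsLRF Y
    apply lrf_of_lattice β γ N hN hsub hv hh Y
    intro v j hv2
    rw [hvalY, hvalY]
    exact ylat v j hv2
  · -- DomLE Z Y
    refine (dom_iff β γ hv Z Y).2 (fun u j => ?_)
    rw [hcntY]
    exact ydom u j
  · -- BoxMove X Y
    refine ⟨(P, γ.f P), (Q, γ.f Q), hmemP, hmemQ, hPQ, hxPQ, ?_⟩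
    have hupd : Function.update (Function.update X.entry (P, γ.f P)
        (X.entry (Q, γ.f Q))) (Q, γ.f Q) (X.entry (P, γ.f P)) = Y.entry := by
      funext p
      rcases p with ⟨i, j⟩
      rw [Function.update_apply, Function.update_apply, hYent]
      by_cases h1 : ((i, j) : ℕ × ℕ) = (Q, γ.f Q)
      · rw [if_pos h1, h1, if_pos hmemQ]
        show wordOf β γ X P = swapf (wordOf β γ X) P Q ((Q : ℕ), γ.f Q).1
        rw [show ((Q : ℕ), γ.f Q).1 = Q from rfl, swapf_Q (wordOf β γ X) (by omega : P ≠ Q)]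
      · rw [if_neg h1]
        by_cases h2 : ((i, j) : ℕ × ℕ) = (P, γ.f P)
        · rw [if_pos h2, h2, if_pos hmemP]
          show wordOf β γ X Q = swapf (wordOf β γ X) P Q ((P : ℕ), γ.f P).1
          rw [show ((P : ℕ), γ.f P).1 = P from rfl, swapf_P]
        · rw [if_neg h2]
          by_cases hcell : ((i, j) : ℕ × ℕ) ∈ SkewCells β γ
          · rw [if_pos hcell]
            obtain ⟨hR, rfl⟩ := (mem_cells β γ hv i j).1 hcell
            have hiP : i ≠ P := fun he => h2 (by rw [he])
            have hiQ : i ≠ Q := fun he => h1 (by rw [he])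
            show X.entry (i, γ.f i) = swapf (wordOf β γ X) P Q ((i : ℕ), γ.f i).1
            rw [show ((i : ℕ), γ.f i).1 = i from rfl, swapf_other (wordOf β γ X) hiP hiQ]
            rfl
          · rw [if_neg hcell, X.zero_outside _ hcell]
    rw [hupd]
  · -- decrease everywhere
    intro u j
    rw [hcntY]
    exact yle u j
  · -- strict decrease at a bounded point
    refine ⟨wordOf β γ X P, P + 1, ?_, ?_, ?_⟩
    · have := entry_bound β γ N hN hv Ba hBa X P hRP
      omega
    · have := hN P hRP
      omega
    · rw [hcntY]
      exact ystrict

end Bridge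
/-- for a rook strip, if `Z <_dom X` then a single decreasing box
move splits off: there is an LR-filling `Y` with `Z ≤_dom Y` and `Y` obtained from
`X` by one box move; consequently `Z ≤_dom X` implies `Z ≤_box X`. -/
theorem stmt13 (α β γ : Partn) (hsub : PartnSub γ β) (hrook : RookStrip β γ)
    (X Z : SkFilling α β γ) (hX : IsLRF X) (hZ : IsLRF Z) :
    ((DomLE Z X ∧ Z ≠ X) →
      ∃ Y : SkFilling α β γ, IsLRF Y ∧ DomLE Z Y ∧ BoxMove X Y) ∧
    (DomLE Z X → LeBox Z X) := by
  classical
  obtain ⟨Nb, hNb⟩ := β.finite_supp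
  have hN : ∀ i, Rw β γ i → i < Nb := by
    intro i hR
    by_contra hcon
    push_neg at hcon
    have := hNb i hcon
    simp only [Rw] at hR
    omega
  obtain ⟨Ba, hBa⟩ := α.finite_supp
  constructor
  · rintro ⟨hdom, hne⟩
    obtain ⟨Y, h1, h2, h3, _, _⟩ :=
      key β γ (N := Nb) hsub hrook hN Ba hBa X Z hX hZ hdom hne
    exact ⟨Y, h1, h2, h3⟩
  · intro hdom
    have main : ∀ k (X' : SkFilling α β γ), IsLRF X' → DomLE Z X' →
        (∑ p ∈ Finset.range (Ba+1) ×ˢ Finset.range (Nb+1),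
          wcnt (Rw β γ) (wordOf β γ X') p.1 p.2) < k → LeBox Z X' := by
      intro k
      induction k with
      | zero => intro X' _ _ h; omega
      | succ k ih =>
        intro X' hX' hdom' hm
        by_cases hzx : Z = X'
        · exact hzx ▸ Relation.ReflTransGen.refl
        · obtain ⟨Y, hY1, hY2, hY3, hY4, u0, j0, hu0, hj0, hstrict⟩ :=
            key β γ (N := Nb) hsub hrook hN Ba hBa X' Z hX' hZ hdom' hzx
          have hmY : (∑ p ∈ Finset.range (Ba+1) ×ˢ Finset.range (Nb+1),
              wcnt (Rw β γ) (wordOf β γ Y) p.1 p.2)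
              < ∑ p ∈ Finset.range (Ba+1) ×ˢ Finset.range (Nb+1),
              wcnt (Rw β γ) (wordOf β γ X') p.1 p.2 := by
            apply Finset.sum_lt_sum
            · intro p _
              exact hY4 p.1 p.2
            · exact ⟨(u0, j0), Finset.mem_product.2
                ⟨Finset.mem_range.2 hu0, Finset.mem_range.2 hj0⟩, hstrict⟩
          exact Relation.ReflTransGen.tail (ih Y hY1 hY2 (by omega)) ⟨hY1, hX', hY3⟩
    exact main ((∑ p ∈ Finset.range (Ba+1) ×ˢ Finset.range (Nb+1),
      wcnt (Rw β γ) (wordOf β γ X) p.1 p.2) + 1) X hX hdom (by omega)
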